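/- Let L_1*, L_2*, L̂_2 be d-dimensional subspaces of R^D and t a real number such that P_{L̂_2} = (1 − t) P_{L_1*} + t P_{L_2*}. If t < 1, then L̂_2 = L_1* (hence L_1* = L_2* when t ≠ 0 forces further collapse); if t ≥ 1, then L̂_2 = L_2*. In particular, if L_1* ≠ L_2* and L̂_2 ∉ {L_1*, L_2*}, no such t exists. -/

import Mathlib

open scoped RealInnerProductSpace
noncomputable section

abbrev E (D : ℕ) := EuclideanSpace ℝ (Fin D)

/-- projection onto `L` as an endomorphism of `E D` -/
def projL {D : ℕ} (L : Submodule ℝ (E D)) : E D →ₗ[ℝ] E D :=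
  L.subtype ∘ₗ L.orthogonalProjectionOnto.toLinearMap

/-- projection matrix of `L` -/
def projMat {D : ℕ} (L : Submodule ℝ (E D)) : Matrix (Fin D) (Fin D) ℝ :=
  LinearMap.toMatrix (EuclideanSpace.basisFun (Fin D) ℝ).toBasis
    (EuclideanSpace.basisFun (Fin D) ℝ).toBasis (projL L)

/-- eigenvalues of a matrix (0 if not Hermitian) -/
def eigs {D : ℕ} (M : Matrix (Fin D) (Fin D) ℝ) : Fin D → ℝ :=
  if h : M.IsHermitian then h.eigenvalues else 0

/-- the Grassmannian distance: the square root of the sum of the squares of the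
principal angles between two `d`-dimensional subspaces.  The eigenvalues of
`P_F P_G P_F` are the `d` values `cos² θ_i` together with `D - d` zeros, so
`∑ arccos(√λ_i)² = ∑ θ_i² + (D-d)(π/2)²`. -/
def dG {D : ℕ} (d : ℕ) (F G : Submodule ℝ (E D)) : ℝ :=
  Real.sqrt (∑ i, (Real.arccos (Real.sqrt (eigs (projMat F * projMat G * projMat F) i))) ^ 2
    - (D - d : ℝ) * (Real.pi / 2) ^ 2)


lemma quad_eq {D : ℕ} (L : Submodule ℝ (E D)) (v : E D) :
    ⟪v, projL L v⟫ = ‖(L.orthogonalProjectionOnto v : E D)‖^2 := by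
  have h : v - (L.orthogonalProjectionOnto v : E D) ∈ Lᗮ :=
    Submodule.sub_starProjection_mem_orthogonal (K := L) v
  have h2 : ⟪(L.orthogonalProjectionOnto v : E D), v - (L.orthogonalProjectionOnto v : E D)⟫ = 0 :=
    Submodule.mem_orthogonal L _ |>.mp h _ (Submodule.coe_mem _)
  have h3 := real_inner_self_eq_norm_sq ((L.orthogonalProjectionOnto v : E D))
  have : projL L v = (L.orthogonalProjectionOnto v : E D) := rfl
  rw [this]
  rw [inner_sub_right] at h2
  rw [real_inner_comm] at h2
  nlinarith [h2, h3]

lemma quad_decomp {D : ℕ} (L : Submodule ℝ (E D)) (v : E D) :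
    ‖v‖^2 = ⟪v, projL L v⟫ + ‖v - (L.orthogonalProjectionOnto v : E D)‖^2 := by
  have h : v - (L.orthogonalProjectionOnto v : E D) ∈ Lᗮ :=
    Submodule.sub_starProjection_mem_orthogonal (K := L) v
  have h2 : ⟪(L.orthogonalProjectionOnto v : E D), v - (L.orthogonalProjectionOnto v : E D)⟫ = 0 :=
    Submodule.mem_orthogonal L _ |>.mp h _ (Submodule.coe_mem _)
  have h3 := real_inner_self_eq_norm_sq ((L.orthogonalProjectionOnto v : E D))
  have h4 := real_inner_self_eq_norm_sq (v - (L.orthogonalProjectionOnto v : E D))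
  have h5 := real_inner_self_eq_norm_sq v
  have hc := real_inner_comm v ((L.orthogonalProjectionOnto v : E D))
  rw [quad_eq]
  rw [inner_sub_right] at h2
  rw [inner_sub_left, inner_sub_right, inner_sub_right] at h4
  nlinarith [h2, h3, h4, h5, hc]

lemma quad_nonneg {D : ℕ} (L : Submodule ℝ (E D)) (v : E D) : 0 ≤ ⟪v, projL L v⟫ := by
  rw [quad_eq]; positivity

lemma quad_le {D : ℕ} (L : Submodule ℝ (E D)) (v : E D) : ⟪v, projL L v⟫ ≤ ‖v‖^2 := by
  have := quad_decomp L v; nlinarith [sq_nonneg ‖v - (L.orthogonalProjectionOnto v : E D)‖]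

lemma quad_eq_norm_iff {D : ℕ} (L : Submodule ℝ (E D)) (v : E D) :
    ⟪v, projL L v⟫ = ‖v‖^2 ↔ v ∈ L := by
  rw [← Submodule.starProjection_eq_self_iff (K := L) (v := v),
    ← Submodule.coe_orthogonalProjectionOnto_apply]
  constructor
  · intro h
    have hd := quad_decomp L v
    have : ‖v - (L.orthogonalProjectionOnto v : E D)‖^2 = 0 := by linarith
    have : v - (L.orthogonalProjectionOnto v : E D) = 0 := by
      simpa [pow_eq_zero_iff, norm_eq_zero] using this
    have := sub_eq_zero.mp this
    exact_mod_cast this.symm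
  · intro h
    rw [quad_eq, h]

lemma quad_eq_zero_iff {D : ℕ} (L : Submodule ℝ (E D)) (v : E D) :
    ⟪v, projL L v⟫ = 0 ↔ v ∈ Lᗮ := by
  rw [quad_eq, ← Submodule.orthogonalProjectionOnto_eq_zero_iff (K := L)]
  constructor
  · intro h
    have : ‖(L.orthogonalProjectionOnto v : E D)‖ = 0 := by
      nlinarith [norm_nonneg (L.orthogonalProjectionOnto v : E D)]
    have := norm_eq_zero.mp this
    exact_mod_cast this
  · intro h; rw [h]; simp

/-- if `P_{L̂₂} = (1-t) P_{L₁*} + t P_{L₂*}` then `t < 1` forces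
`L̂₂ = L₁*` and `t ≥ 1` forces `L̂₂ = L₂*`; in particular no such `t` exists when
`L₁* ≠ L₂*` and `L̂₂ ∉ {L₁*, L₂*}`. -/
theorem proj_convex_combination_collapse
    (D d : ℕ) (hd : 0 < d) (hdD : d < D)
    (L₁ L₂ Lhat : Submodule ℝ (E D))
    (h₁ : Module.finrank ℝ L₁ = d) (h₂ : Module.finrank ℝ L₂ = d)
    (hhat : Module.finrank ℝ Lhat = d)
    (t : ℝ)
    (hcomb : projMat Lhat = (1 - t) • projMat L₁ + t • projMat L₂) :
    ((t < 1 → Lhat = L₁) ∧ (1 ≤ t → Lhat = L₂)) ∧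
    (L₁ ≠ L₂ → Lhat ≠ L₁ → Lhat ≠ L₂ → False) := by
  have hlin : projL Lhat = (1 - t) • projL L₁ + t • projL L₂ := by
    apply (LinearMap.toMatrix (EuclideanSpace.basisFun (Fin D) ℝ).toBasis
      (EuclideanSpace.basisFun (Fin D) ℝ).toBasis).injective
    rw [map_add, map_smul, map_smul]
    exact hcomb
  have key : ∀ v : E D, ⟪v, projL Lhat v⟫ = (1 - t) * ⟪v, projL L₁ v⟫ + t * ⟪v, projL L₂ v⟫ := by
    intro v
    rw [hlin]
    rw [LinearMap.add_apply, LinearMap.smul_apply, LinearMap.smul_apply, inner_add_right,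
      real_inner_smul_right, real_inner_smul_right]
  have hlt : t < 1 → Lhat = L₁ := by
    intro ht
    have hle : Lhat ≤ L₁ := by
      rcases le_or_gt t 0 with ht0 | ht0
      · have hperp : L₁ᗮ ≤ Lhatᗮ := by
          intro v hv
          rw [← quad_eq_zero_iff]
          have hq1 : ⟪v, projL L₁ v⟫ = 0 := (quad_eq_zero_iff _ _).mpr hv
          have hk := key v
          rw [hq1] at hk
          have h2 := quad_nonneg L₂ v
          have h0 := quad_nonneg Lhat v
          nlinarith [mul_nonpos_of_nonpos_of_nonneg ht0 h2]
        have h' := Submodule.orthogonal_le hperp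
        rwa [Submodule.orthogonal_orthogonal, Submodule.orthogonal_orthogonal] at h'
      · intro v hv
        rw [← quad_eq_norm_iff]
        have hhatq : ⟪v, projL Lhat v⟫ = ‖v‖^2 := (quad_eq_norm_iff _ _).mpr hv
        have hk := key v
        have h1 := quad_le L₁ v
        have h2 := quad_le L₂ v
        nlinarith
    exact Submodule.eq_of_le_of_finrank_eq hle (by rw [hhat, h₁])
  have hge : 1 ≤ t → Lhat = L₂ := by
    intro ht
    have hperp : L₂ᗮ ≤ Lhatᗮ := by
      intro v hv
      rw [← quad_eq_zero_iff]
      have hq2 : ⟪v, projL L₂ v⟫ = 0 := (quad_eq_zero_iff _ _).mpr hv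
      have hk := key v
      rw [hq2] at hk
      have h1 := quad_nonneg L₁ v
      have h0 := quad_nonneg Lhat v
      nlinarith
    have h' := Submodule.orthogonal_le hperp
    rw [Submodule.orthogonal_orthogonal, Submodule.orthogonal_orthogonal] at h'
    exact Submodule.eq_of_le_of_finrank_eq h' (by rw [hhat, h₂])
  refine ⟨⟨hlt, hge⟩, fun _ hne1 hne2 => ?_⟩
  rcases lt_or_ge t 1 with h | h
  · exact hne1 (hlt h)
  · exact hne2 (hge h)
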